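/- arXiv:0905.3081 — 3 statements merged into one kernel-verified Lean document; each statement's English description precedes it below -/
import Mathlib

section
/- For all integers n ≥ 1, 1 ≤ i ≤ n, and 0 ≤ j ≤ i, the number of binary trees with n+1 vertices whose left branch has length j+1 and whose right branch has length i−j+1 equals the ballot number (i/(2n−i))·binomial(2n−i, n); in particular this count does not depend on j. -/
/-- A binary tree: empty, or a root with a left and a right subtree. -/
inductive BinTree : Type
  | nil : BinTree
  | node : BinTree → BinTree → BinTree
  deriving DecidableEq

/-- Number of vertices of a binary tree. -/
def BinTree.size : BinTree → ℕ
  | .nil => 0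
  | .node l r => l.size + r.size + 1

/-- Length (number of vertices) of the left branch. -/
def BinTree.leftBranchLen : BinTree → ℕ
  | .nil => 0
  | .node l _ => l.leftBranchLen + 1

/-- Length (number of vertices) of the right branch. -/
def BinTree.rightBranchLen : BinTree → ℕ
  | .nil => 0
  | .node _ r => r.rightBranchLen + 1

/-- Word over {a,b} (a = `true`, b = `false`) reading the vertices in symmetric
(in-)order; a vertex contributes `true` iff it has a right child. -/
def BinTree.canopyFull : BinTree → List Bool
  | .nil => []
  | .node l r => l.canopyFull ++ (decide (r ≠ BinTree.nil)) :: r.canopyFull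

/-- The canopy of a binary tree with `n` vertices: the word `u₁ … u_{n-1}` over
{a = `true`, b = `false`} with `uᵢ = a` iff the `i`-th vertex in symmetric order
has a right child.  (The last vertex in symmetric order never has a right child,
so it is dropped.) -/
def BinTree.canopy (B : BinTree) : List Bool := B.canopyFull.dropLast

/-- A Catalan tableau of index `n`: a partition `λ₁ ≥ … ≥ λ_k` with `λ₁ = n - k`,
drawn right-justified inside the `k × (n-k)` rectangle (rows bottom to top, row `i`
having `lam i` cells, occupying columns `j` with `m - lam i ≤ j < m` where
`m = n - k`), filled with 0's (`false`) and 1's (`true`) such that every column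
contains exactly one 1 and no 0 has both a 1 below it in its column and a 1 to
its right in its row.  Entries outside the diagram are forced to `false`. -/
structure CatalanTableau (n : ℕ) where
  k : ℕ
  m : ℕ
  hk : 0 < k
  hkm : k + m = n
  lam : Fin k → ℕ
  lam_le : ∀ i, lam i ≤ m
  lam_first : lam ⟨0, hk⟩ = m
  lam_anti : ∀ i j : Fin k, i ≤ j → lam j ≤ lam i
  f : Fin k → Fin m → Bool
  f_outside : ∀ (i : Fin k) (j : Fin m), (j : ℕ) < m - lam i → f i j = false
  col_one : ∀ j : Fin m, ∃! i : Fin k, f i j = true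
  no_bad : ∀ (i : Fin k) (j : Fin m), m - lam i ≤ (j : ℕ) → f i j = false →
    ¬ ((∃ i' : Fin k, i' < i ∧ f i' j = true) ∧
       (∃ j' : Fin m, (j : ℕ) < (j' : ℕ) ∧ f i j' = true))

/-- The profile of a Catalan tableau: the NW border of its Ferrers diagram read
from the bottom-left corner of the rectangle to its top-right corner
(a = `true` for a north step, b = `false` for an east step), with the first
letter (always a north step) deleted. -/
def CatalanTableau.profile {n : ℕ} (T : CatalanTableau n) : List Bool :=
  ((List.finRange T.k).flatMap (fun i =>
    true :: List.replicate
      (T.lam i - (if h : (i : ℕ) + 1 < T.k then T.lam ⟨(i : ℕ) + 1, h⟩ else 0)) false)).tail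

/-- Number of 1's in the first (bottom) row of a Catalan tableau. -/
noncomputable def CatalanTableau.onesFirstRow {n : ℕ} (T : CatalanTableau n) : ℕ :=
  Nat.card {j : Fin T.m // T.f ⟨0, T.hk⟩ j = true}

/-- An entry is restricted if it is a 0 (in a cell of the diagram) lying above
some 1 in its column. -/
def CatalanTableau.Restricted {n : ℕ} (T : CatalanTableau n)
    (i : Fin T.k) (j : Fin T.m) : Prop :=
  T.m - T.lam i ≤ (j : ℕ) ∧ T.f i j = false ∧ ∃ i' : Fin T.k, i' < i ∧ T.f i' j = true

/-- Number of unrestricted rows (rows of the rectangle containing no restricted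
entry). -/
noncomputable def CatalanTableau.unrestrictedRows {n : ℕ} (T : CatalanTableau n) : ℕ :=
  Nat.card {i : Fin T.k // ∀ j : Fin T.m, ¬ T.Restricted i j}

/-- `weaklyBelow ω η`: the lattice paths coded by `ω`, `η` (a = `true` = north
step, b = `false` = east step, both starting at the origin) have the same
endpoints and `η` never passes strictly above `ω`. -/
def weaklyBelow (ω η : List Bool) : Prop :=
  η.length = ω.length ∧ η.count true = ω.count true ∧
    ∀ t : ℕ, (η.take t).count true ≤ (ω.take t).count true

/-- Heights at which the successive east steps of a path occur. -/
def eastHeightsAux : ℕ → List Bool → List ℕ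
  | _, [] => []
  | h, true :: w => eastHeightsAux (h + 1) w
  | h, false :: w => h :: eastHeightsAux h w

def eastHeights (w : List Bool) : List ℕ := eastHeightsAux 0 w

/-- Number of horizontal contacts of two paths: unit east edges traversed by
both paths. -/
def contacts (ω η : List Bool) : ℕ :=
  ((eastHeights ω).zip (eastHeights η)).countP (fun p => p.1 == p.2)

/-- Number of trailing north steps of a path. -/
def trailingNorth (w : List Bool) : ℕ := (w.reverse.takeWhile (· == true)).length

/-- Number of left edges, i.e. of vertices having a left child. -/
def BinTree.leftEdgeCount : BinTree → ℕ
  | .nil => 0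
  | .node l r => l.leftEdgeCount + r.leftEdgeCount + (if l = BinTree.nil then 0 else 1)

/-- Number of vertices having no right child. -/
def BinTree.noRightCount : BinTree → ℕ
  | .nil => 0
  | .node l r => l.noRightCount + r.noRightCount + (if r = BinTree.nil then 1 else 0)

/-- Symmetric-order traversal recording, for each vertex, whether it has a left
child, whether it has a right child, and its right height (the second argument
is the right height of the current root). -/
def BinTree.inorderAux : BinTree → ℕ → List (Bool × Bool × ℕ)
  | .nil, _ => []
  | .node l r, h =>
      BinTree.inorderAux l h ++
        (decide (l ≠ BinTree.nil), decide (r ≠ BinTree.nil), h) :: BinTree.inorderAux r (h + 1)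

def BinTree.inorder (B : BinTree) : List (Bool × Bool × ℕ) := B.inorderAux 0

/-- The sequence `ρ₁, …, ρ_m`: right heights of the parents of the left edges,
the left edges being ordered by their parents in symmetric order. -/
def BinTree.rhoList (B : BinTree) : List ℕ :=
  (B.inorder.filter (fun v => v.1)).map (fun v => v.2.2)

def hsAux : List (Bool × Bool × ℕ) → ℕ → List ℕ
  | [], _ => []
  | v :: rest, c => if v.2.1 then hsAux rest (c + 1) else c :: hsAux rest c

/-- The sequence `h₁, …, h_m`: for each vertex with no right child (in symmetric
order, excluding the last vertex in symmetric order), the number of vertices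
preceding it in symmetric order that have a right child. -/
def BinTree.hList (B : BinTree) : List ℕ := (hsAux B.inorder 0).dropLast

/-- Leaves of the completion `γ(B)` in symmetric order, each recorded as `true`
if it is a left child of its parent and `false` if it is a right child; the
boolean argument records whether the current subtree sits as a left child. -/
def BinTree.gammaLeavesAux : BinTree → Bool → List Bool
  | .nil, isLeft => [isLeft]
  | .node l r, _ => BinTree.gammaLeavesAux l true ++ BinTree.gammaLeavesAux r false

/-- The word of the leaves of the complete binary tree `γ(B)` in symmetric order
(a = `true` for a left child, b = `false` for a right child). -/
def BinTree.leafWord : BinTree → List Bool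
  | .nil => []
  | .node l r => BinTree.gammaLeavesAux l true ++ BinTree.gammaLeavesAux r false

theorem BinTree.size_eq_zero {B : BinTree} : B.size = 0 ↔ B = BinTree.nil := by
  cases B <;> simp [BinTree.size]

abbrev Forest (i m : ℕ) : Type :=
  {L : List BinTree // L.length = i ∧ (L.map BinTree.size).sum = m}

def splitEquiv (i m : ℕ) : Forest (i+1) (m+1) ≃ Forest i (m+1) ⊕ Forest (i+2) m where
  toFun := fun x => match x with
    | ⟨.nil :: t, h⟩ => .inl ⟨t, by simpa [BinTree.size] using h⟩
    | ⟨.node l r :: t, h⟩ => .inr ⟨l :: r :: t, by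
        simp [BinTree.size] at h ⊢
        omega⟩
    | ⟨[], h⟩ => absurd h.1 (by simp)
  invFun := fun x => match x with
    | .inl ⟨t, h⟩ => ⟨.nil :: t, by simp [BinTree.size, h.1, h.2]⟩
    | .inr ⟨l :: r :: t, h⟩ => ⟨.node l r :: t, by
        simp [BinTree.size] at h ⊢
        omega⟩
    | .inr ⟨[], h⟩ => absurd h.1 (by simp)
    | .inr ⟨[_], h⟩ => absurd h.1 (by simp)
  left_inv := fun x => match x with
    | ⟨.nil :: t, h⟩ => rfl
    | ⟨.node l r :: t, h⟩ => rfl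
    | ⟨[], h⟩ => absurd h.1 (by simp)
  right_inv := fun x => match x with
    | .inl ⟨t, h⟩ => rfl
    | .inr ⟨l :: r :: t, h⟩ => rfl
    | .inr ⟨[], h⟩ => absurd h.1 (by simp)
    | .inr ⟨[_], h⟩ => absurd h.1 (by simp)

instance forest_finite : ∀ m i, Finite (Forest i m) := by
  intro m
  induction m with
  | zero =>
    intro i
    have : Subsingleton (Forest i 0) := by
      constructor
      rintro ⟨L, hL, hs⟩ ⟨L', hL', hs'⟩
      have hrep : ∀ (M : List BinTree), M.length = i → (M.map BinTree.size).sum = 0 →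
          M = List.replicate i BinTree.nil := by
        intro M hM hMs
        rw [List.eq_replicate_iff]
        refine ⟨hM, fun b hb => ?_⟩
        rw [← BinTree.size_eq_zero]
        have := List.sum_eq_zero_iff.mp hMs
        exact this _ (List.mem_map_of_mem hb)
      simp [Subtype.ext_iff, hrep L hL hs, hrep L' hL' hs']
    exact Finite.of_subsingleton
  | succ m ihm =>
    intro i
    induction i with
    | zero =>
      have : IsEmpty (Forest 0 (m+1)) := by
        constructor
        rintro ⟨L, hL, hs⟩
        rw [List.length_eq_zero_iff] at hL
        subst hL
        simp at hs
      infer_instance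
    | succ i ihi =>
      have h1 : Finite (Forest (i+2) m) := ihm (i+2)
      exact Finite.of_equiv _ (splitEquiv i m).symm

def bal : ℕ → ℕ → ℕ
  | 0, _ => 1
  | _+1, 0 => 0
  | m+1, i+1 => bal (m+1) i + bal m (i+2)
  termination_by m i => (m, i)

theorem card_forest : ∀ m i, Nat.card (Forest i m) = bal m i := by
  intro m
  induction m with
  | zero =>
    intro i
    rw [show bal 0 i = 1 from by rw [bal]]
    rw [Nat.card_eq_one_iff_unique]
    constructor
    · constructor
      rintro ⟨L, hL, hs⟩ ⟨L', hL', hs'⟩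
      have hrep : ∀ (M : List BinTree), M.length = i → (M.map BinTree.size).sum = 0 →
          M = List.replicate i BinTree.nil := by
        intro M hM hMs
        rw [List.eq_replicate_iff]
        refine ⟨hM, fun b hb => ?_⟩
        rw [← BinTree.size_eq_zero]
        exact List.sum_eq_zero_iff.mp hMs _ (List.mem_map_of_mem hb)
      simp [Subtype.ext_iff, hrep L hL hs, hrep L' hL' hs']
    · exact ⟨⟨List.replicate i BinTree.nil, by simp [BinTree.size]⟩⟩
  | succ m ihm =>
    intro i
    induction i with
    | zero =>
      rw [show bal (m+1) 0 = 0 from by rw [bal]]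
      have : IsEmpty (Forest 0 (m+1)) := by
        constructor
        rintro ⟨L, hL, hs⟩
        rw [List.length_eq_zero_iff] at hL
        subst hL
        simp at hs
      exact Nat.card_of_isEmpty
    | succ i ihi =>
      rw [show bal (m+1) (i+1) = bal (m+1) i + bal m (i+2) from by rw [bal]]
      rw [Nat.card_congr (splitEquiv i m), Nat.card_sum, ihi, ihm (i+2)]

def toListL : BinTree → List BinTree
  | .nil => []
  | .node l r => r :: toListL l

def ofListL : List BinTree → BinTree
  | [] => .nil
  | r :: rs => .node (ofListL rs) r

def toListR : BinTree → List BinTree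
  | .nil => []
  | .node l r => l :: toListR r

def ofListR : List BinTree → BinTree
  | [] => .nil
  | l :: ls => .node l (ofListR ls)

theorem ofListL_toListL : ∀ B, ofListL (toListL B) = B
  | .nil => rfl
  | .node l r => by rw [toListL, ofListL, ofListL_toListL]

theorem toListL_ofListL : ∀ L, toListL (ofListL L) = L
  | [] => rfl
  | r :: rs => by rw [ofListL, toListL, toListL_ofListL]

theorem ofListR_toListR : ∀ B, ofListR (toListR B) = B
  | .nil => rfl
  | .node l r => by rw [toListR, ofListR, ofListR_toListR]

theorem toListR_ofListR : ∀ L, toListR (ofListR L) = L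
  | [] => rfl
  | l :: ls => by rw [ofListR, toListR, toListR_ofListR]

theorem length_toListL : ∀ B : BinTree, (toListL B).length = B.leftBranchLen
  | .nil => rfl
  | .node l r => by
      rw [toListL, BinTree.leftBranchLen, List.length_cons, length_toListL]

theorem length_toListR : ∀ B : BinTree, (toListR B).length = B.rightBranchLen
  | .nil => rfl
  | .node l r => by
      rw [toListR, BinTree.rightBranchLen, List.length_cons, length_toListR]

theorem sum_toListL : ∀ B : BinTree,
    ((toListL B).map BinTree.size).sum + B.leftBranchLen = B.size
  | .nil => rfl
  | .node l r => by
      rw [toListL, BinTree.leftBranchLen, BinTree.size]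
      simp only [List.map_cons, List.sum_cons]
      have := sum_toListL l
      omega

theorem sum_toListR : ∀ B : BinTree,
    ((toListR B).map BinTree.size).sum + B.rightBranchLen = B.size
  | .nil => rfl
  | .node l r => by
      rw [toListR, BinTree.rightBranchLen, BinTree.size]
      simp only [List.map_cons, List.sum_cons]
      have := sum_toListR r
      omega

def mainEquiv (n i j : ℕ) (hi1 : 1 ≤ i) (hin : i ≤ n) (hj : j ≤ i) :
    {B : BinTree //
        B.size = n + 1 ∧ B.leftBranchLen = j + 1 ∧ B.rightBranchLen = i - j + 1} ≃
      Forest i (n - i) where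
  toFun := fun x => match x with
    | ⟨.nil, h⟩ => absurd h.2.1 (by simp [BinTree.leftBranchLen])
    | ⟨.node l r, h⟩ => ⟨toListL l ++ toListR r, by
        obtain ⟨h1, h2, h3⟩ := h
        rw [BinTree.size] at h1
        rw [BinTree.leftBranchLen] at h2
        rw [BinTree.rightBranchLen] at h3
        have e2 : l.leftBranchLen = j := by omega
        have e3 : r.rightBranchLen = i - j := by omega
        have s1 := sum_toListL l
        have s2 := sum_toListR r
        have l1 := length_toListL l
        have l2 := length_toListR r
        constructor
        · rw [List.length_append]; omega
        · rw [List.map_append, List.sum_append]; omega⟩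
  invFun := fun x => match x with
    | ⟨L, h⟩ => ⟨.node (ofListL (L.take j)) (ofListR (L.drop j)), by
        obtain ⟨h1, h2⟩ := h
        have t1 : (L.take j).length = j := by rw [List.length_take]; omega
        have t2 : (L.drop j).length = i - j := by rw [List.length_drop]; omega
        have l1 : (toListL (ofListL (L.take j))).length = (ofListL (L.take j)).leftBranchLen :=
          length_toListL _
        have l2 : (toListR (ofListR (L.drop j))).length = (ofListR (L.drop j)).rightBranchLen :=
          length_toListR _
        rw [toListL_ofListL] at l1
        rw [toListR_ofListR] at l2
        have s1 := sum_toListL (ofListL (L.take j))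
        have s2 := sum_toListR (ofListR (L.drop j))
        rw [toListL_ofListL] at s1
        rw [toListR_ofListR] at s2
        have hsum : ((L.take j).map BinTree.size).sum + ((L.drop j).map BinTree.size).sum
            = n - i := by
          rw [← List.sum_append, ← List.map_append, List.take_append_drop]; exact h2
        refine ⟨?_, ?_, ?_⟩
        · rw [BinTree.size]; omega
        · rw [BinTree.leftBranchLen]; omega
        · rw [BinTree.rightBranchLen]; omega⟩
  left_inv := fun x => match x with
    | ⟨.nil, h⟩ => absurd h.2.1 (by simp [BinTree.leftBranchLen])
    | ⟨.node l r, h⟩ => by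
        have hlen : (toListL l).length = j := by
          have h2 := h.2.1
          rw [BinTree.leftBranchLen] at h2
          rw [length_toListL]; omega
        apply Subtype.ext
        simp only
        rw [← hlen, List.take_left, List.drop_left, ofListL_toListL, ofListR_toListR]
  right_inv := fun x => match x with
    | ⟨L, h⟩ => by
        apply Subtype.ext
        simp only
        rw [toListL_ofListL, toListR_ofListR, List.take_append_drop]

theorem bal_formula : ∀ m i : ℕ, ((2*m+i : ℕ) * bal m i : ℚ) = i * ((2*m+i).choose m) := by
  intro m
  induction m with
  | zero =>
    intro i
    simp [bal]
  | succ m ihm =>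
    intro i
    induction i with
    | zero => simp [bal]
    | succ i ihi =>
      have k1 : ((2*m+i+2 : ℕ) : ℚ) * bal (m+1) i = i * ((2*m+i+2).choose (m+1)) := by
        have h := ihi
        rw [show 2*(m+1)+i = 2*m+i+2 from by ring] at h
        exact_mod_cast h
      have k2 : ((2*m+i+2 : ℕ) : ℚ) * bal m (i+2) = (i+2) * ((2*m+i+2).choose m) := by
        have h := ihm (i+2)
        rw [show 2*m+(i+2) = 2*m+i+2 from by ring] at h
        exact_mod_cast h
      have hP : ((2*m+i+3).choose (m+1) : ℚ) = (2*m+i+2).choose m + (2*m+i+2).choose (m+1) := by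
        have h2 : (2*m+i+3).choose (m+1) = (2*m+i+2).choose m + (2*m+i+2).choose (m+1) :=
          Nat.choose_succ_succ (2*m+i+2) m
        exact_mod_cast h2
      have hS : ((2*m+i+3 : ℕ) : ℚ) * (2*m+i+2).choose m = ((2*m+i+3).choose (m+1)) * (m+1) := by
        have h := Nat.add_one_mul_choose_eq (2*m+i+2) m
        have h2 : (2*m+i+3) * (2*m+i+2).choose m = (2*m+i+3).choose (m+1) * (m+1) := by
          simpa [Nat.succ_eq_add_one] using h
        exact_mod_cast h2
      have hrec : (bal (m+1) (i+1) : ℚ) = bal (m+1) i + bal m (i+2) := by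
        rw [show bal (m+1) (i+1) = bal (m+1) i + bal m (i+2) from by rw [bal]]
        push_cast; ring
      have hN : ((2*m+i+2 : ℕ) : ℚ) ≠ 0 := by
        push_cast; positivity
      rw [show 2*(m+1)+(i+1) = 2*m+i+3 from by ring]
      apply mul_left_cancel₀ hN
      push_cast at k1 k2 hP hS hrec ⊢
      rw [hrec]
      linear_combination (((2:ℚ)*m+i+3)) * k1 + ((2:ℚ)*m+i+3) * k2 - (i:ℚ)*((2:ℚ)*m+i+3)*hP + 2*hS

/-- For all integers `n ≥ 1`, `1 ≤ i ≤ n`, `0 ≤ j ≤ i`, the number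
of binary trees with `n + 1` vertices whose left branch has length `j + 1` and
whose right branch has length `i - j + 1` equals the ballot number
`(i/(2n - i))·binomial(2n - i, n)`; in particular this count does not depend on
`j`. -/
theorem card_binTree_branch_lengths_eq_ballot
    (n i j : ℕ) (hn : 1 ≤ n) (hi1 : 1 ≤ i) (hin : i ≤ n) (hj : j ≤ i) :
    (Nat.card {B : BinTree //
        B.size = n + 1 ∧ B.leftBranchLen = j + 1 ∧ B.rightBranchLen = i - j + 1} : ℚ) =
      (i : ℚ) / ((2 * n - i : ℕ) : ℚ) * (((2 * n - i).choose n : ℕ) : ℚ) := by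
  rw [Nat.card_congr (mainEquiv n i j hi1 hin hj), card_forest]
  have hf := bal_formula (n - i) i
  rw [show 2*(n-i)+i = 2*n-i from by omega] at hf
  have e2 : (2*n-i).choose (n-i) = (2*n-i).choose n := by
    have h := Nat.choose_symm (show n ≤ 2*n-i by omega)
    rw [show (2*n-i)-n = n-i from by omega] at h
    exact h
  rw [e2] at hf
  have hN : ((2*n-i : ℕ) : ℚ) ≠ 0 := Nat.cast_ne_zero.mpr (by omega)
  rw [div_mul_eq_mul_div, eq_div_iff hN]
  linear_combination hf
end

section
/- For every integer n ≥ 1 and all real numbers x, y (equivalently, as an identity of polynomials in x and y): the sum over all binary trees B with n+1 vertices of x^(ℓ(B)−1)·y^(r(B)−1), where ℓ(B) and r(B) denote the lengths of the left and right branches of B, equals the sum over i from 1 to n of (i/(2n−i))·binomial(2n−i, n) times (x^i + x^(i−1)y + x^(i−2)y^2 + … + y^i), i.e. ∑_B x^(ℓ(B)−1) y^(r(B)−1) = ∑_{i=1}^{n} (i/(2n−i))·C(2n−i, n)·∑_{j=0}^{i} x^j y^(i−j). -/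
/-! ### Auxiliary development for Statement 15 -/

open Finset

namespace Stmt15

def toTree : BinTree → Tree Unit
  | .nil => .nil
  | .node l r => .node () (toTree l) (toTree r)

def ofTree : Tree Unit → BinTree
  | .nil => .nil
  | .node _ l r => .node (ofTree l) (ofTree r)

lemma toTree_ofTree : ∀ t : Tree Unit, toTree (ofTree t) = t
  | .nil => rfl
  | .node _ l r => by simp [ofTree, toTree, toTree_ofTree l, toTree_ofTree r]

lemma ofTree_toTree : ∀ B : BinTree, ofTree (toTree B) = B
  | .nil => rfl
  | .node l r => by simp [ofTree, toTree, ofTree_toTree l, ofTree_toTree r]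

lemma size_ofTree : ∀ t : Tree Unit, (ofTree t).size = t.numNodes
  | .nil => rfl
  | .node _ l r => by
      simp only [ofTree, BinTree.size, BinaryTree.numNodes, size_ofTree l, size_ofTree r]

lemma ofTree_injective : Function.Injective ofTree := fun a b h => by
  rw [← toTree_ofTree a, h, toTree_ofTree]

/-- The finset of binary trees with `m` vertices. -/
noncomputable def treesOfSize (m : ℕ) : Finset BinTree :=
  (Tree.treesOfNumNodesEq m).map ⟨ofTree, ofTree_injective⟩

@[simp] lemma mem_treesOfSize {B : BinTree} {m : ℕ} :
    B ∈ treesOfSize m ↔ B.size = m := by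
  simp only [treesOfSize, mem_map, BinaryTree.mem_treesOfNumNodesEq,
    Function.Embedding.coeFn_mk]
  constructor
  · rintro ⟨t, ht, rfl⟩; rw [size_ofTree]; exact ht
  · intro h
    exact ⟨toTree B, by
        have e := size_ofTree (toTree B); rw [ofTree_toTree] at e; exact e.symm.trans h,
      ofTree_toTree B⟩

lemma treesOfSize_zero : treesOfSize 0 = {BinTree.nil} := by
  ext B
  simp only [mem_treesOfSize, mem_singleton]
  constructor
  · intro h; cases B with
    | nil => rfl
    | node l r => simp [BinTree.size] at h
  · rintro rfl; rfl

def bleft : BinTree → BinTree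
  | .nil => .nil
  | .node l _ => l

def bright : BinTree → BinTree
  | .nil => .nil
  | .node _ r => r

/-- Decomposition of the sum over trees with `p + 1` vertices. -/
lemma sum_treesOfSize_succ (p : ℕ) (f : BinTree → ℝ) :
    ∑ B ∈ treesOfSize (p + 1), f B
      = ∑ uv ∈ antidiagonal p, ∑ l ∈ treesOfSize uv.1, ∑ r ∈ treesOfSize uv.2,
          f (BinTree.node l r) := by
  have h0 : ∑ uv ∈ antidiagonal p, ∑ l ∈ treesOfSize uv.1, ∑ r ∈ treesOfSize uv.2,
          f (BinTree.node l r)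
      = ∑ z ∈ (antidiagonal p).sigma
            (fun uv => treesOfSize uv.1 ×ˢ treesOfSize uv.2),
          f (BinTree.node z.2.1 z.2.2) := by
    rw [Finset.sum_sigma]
    exact Finset.sum_congr rfl fun uv _ => by rw [Finset.sum_product]
  rw [h0]
  refine Finset.sum_nbij'
    (fun B => (⟨((bleft B).size, (bright B).size), (bleft B, bright B)⟩ :
        (_ : ℕ × ℕ) × (BinTree × BinTree)))
    (fun z => BinTree.node z.2.1 z.2.2) ?_ ?_ ?_ ?_ ?_
  · intro B hB
    simp only [mem_treesOfSize] at hB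
    cases B with
    | nil => simp [BinTree.size] at hB
    | node l r =>
      simp only [bleft, bright, mem_sigma, Finset.mem_product,
        Finset.HasAntidiagonal.mem_antidiagonal, mem_treesOfSize]
      refine ⟨?_, trivial, trivial⟩
      simp only [BinTree.size] at hB; omega
  · intro z hz
    simp only [mem_sigma, Finset.mem_product, Finset.HasAntidiagonal.mem_antidiagonal,
      mem_treesOfSize] at hz
    simp only [mem_treesOfSize, BinTree.size, hz.2.1, hz.2.2]
    omega
  · intro B hB
    simp only [mem_treesOfSize] at hB
    cases B with
    | nil => simp [BinTree.size] at hB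
    | node l r => rfl
  · rintro ⟨⟨u, v⟩, l, r⟩ hz
    simp only [mem_sigma, Finset.mem_product, Finset.HasAntidiagonal.mem_antidiagonal,
      mem_treesOfSize] at hz
    obtain ⟨h1, h2, h3⟩ := hz
    simp [bleft, bright, h2, h3]
  · intro B hB
    simp only [mem_treesOfSize] at hB
    cases B with
    | nil => simp [BinTree.size] at hB
    | node l r => rfl

noncomputable def Tc (v : ℕ) : ℝ := ((treesOfSize v).card : ℝ)

lemma Tc_sum (v : ℕ) : Tc v = ∑ _B ∈ treesOfSize v, (1 : ℝ) := by
  simp [Tc]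

lemma Tc_zero : Tc 0 = 1 := by simp [Tc, treesOfSize_zero]

lemma Tc_succ (p : ℕ) :
    Tc (p + 1) = ∑ uv ∈ antidiagonal p, Tc uv.1 * Tc uv.2 := by
  rw [Tc_sum, sum_treesOfSize_succ]
  exact Finset.sum_congr rfl fun uv _ => by
    rw [Tc_sum, Tc_sum, Finset.sum_mul_sum]; simp

noncomputable def Tser : PowerSeries ℝ := PowerSeries.mk Tc

noncomputable def Fc (k s : ℕ) : ℝ := PowerSeries.coeff s (Tser ^ k)

lemma Tser_eq : Tser = 1 + PowerSeries.X * Tser ^ 2 := by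
  ext n
  cases n with
  | zero =>
      simp [Tser, Tc_zero]
  | succ m =>
      rw [map_add, PowerSeries.coeff_succ_X_mul]
      simp only [Tser, PowerSeries.coeff_mk, PowerSeries.coeff_one,
        Nat.succ_ne_zero, if_false, zero_add, pow_two, PowerSeries.coeff_mul,
        Tc_succ]

lemma Fc_zero (s : ℕ) : Fc 0 s = if s = 0 then 1 else 0 := by
  simp [Fc, PowerSeries.coeff_one]

lemma Fc_succ (k s : ℕ) :
    Fc (k + 1) s = ∑ uv ∈ antidiagonal s, Fc k uv.1 * Tc uv.2 := by
  simp [Fc, pow_succ, PowerSeries.coeff_mul, Tser, PowerSeries.coeff_mk]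

lemma Fc_zero_right (k : ℕ) : Fc k 0 = 1 := by
  simp only [Fc, ← PowerSeries.coeff_zero_eq_constantCoeff_apply, map_pow]
  rw [PowerSeries.coeff_zero_eq_constantCoeff_apply, map_pow]
  have : PowerSeries.constantCoeff Tser = 1 := by
    simp [Tser, ← PowerSeries.coeff_zero_eq_constantCoeff_apply, Tc_zero]
  rw [this, one_pow]

lemma Fc_conv (a b m : ℕ) :
    ∑ uv ∈ antidiagonal m, Fc a uv.1 * Fc b uv.2 = Fc (a + b) m := by
  simp [Fc, pow_add, PowerSeries.coeff_mul]

lemma Fc_rec (k t : ℕ) : Fc (k + 1) (t + 1) = Fc k (t + 1) + Fc (k + 2) t := by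
  have h : Tser ^ (k + 1) = Tser ^ k + PowerSeries.X * Tser ^ (k + 2) := by
    rw [pow_succ]
    nth_rewrite 2 [Tser_eq]
    ring
  simp only [Fc, h, map_add, PowerSeries.coeff_succ_X_mul]

noncomputable def gB (k s : ℕ) : ℝ :=
  if s = 0 then 1
  else ((2 * s + k - 1).choose s : ℝ) - ((2 * s + k - 1).choose (s - 1) : ℝ)

lemma gB_zero_right (k : ℕ) : gB k 0 = 1 := by simp [gB]

lemma gB_zero_left {s : ℕ} (hs : s ≠ 0) : gB 0 s = 0 := by
  obtain ⟨t, rfl⟩ := Nat.exists_eq_succ_of_ne_zero hs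
  simp only [gB, Nat.succ_ne_zero, if_false]
  have h : 2 * (t + 1) + 0 - 1 = 2 * t + 1 := by omega
  rw [h, Nat.succ_sub_one]
  have h2 : (2 * t + 1).choose (t + 1) = (2 * t + 1).choose t := by
    rw [← Nat.choose_symm (by omega : t + 1 ≤ 2 * t + 1)]
    congr 1
    omega
  rw [h2, sub_self]

lemma gB_rec (k t : ℕ) : gB (k + 1) (t + 1) = gB k (t + 1) + gB (k + 2) t := by
  cases t with
  | zero =>
      simp only [gB, Nat.succ_ne_zero, if_false, if_pos rfl]
      norm_num [Nat.choose_one_right]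
      ring
  | succ s =>
      simp only [gB, Nat.succ_ne_zero, if_false]
      have e1 : 2 * (s + 1 + 1) + (k + 1) - 1 = 2 * s + k + 4 := by omega
      have e2 : 2 * (s + 1 + 1) + k - 1 = 2 * s + k + 3 := by omega
      have e3 : 2 * (s + 1) + (k + 2) - 1 = 2 * s + k + 3 := by omega
      have e4 : s + 1 + 1 - 1 = s + 1 := rfl
      have e5 : s + 1 - 1 = s := rfl
      rw [e1, e2, e3, e4, e5]
      have p1 : (2 * s + k + 4).choose (s + 2) =
          (2 * s + k + 3).choose (s + 1) + (2 * s + k + 3).choose (s + 2) :=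
        Nat.choose_succ_succ _ _
      have p2 : (2 * s + k + 4).choose (s + 1) =
          (2 * s + k + 3).choose s + (2 * s + k + 3).choose (s + 1) :=
        Nat.choose_succ_succ _ _
      have q1 := congrArg (Nat.cast (R := ℝ)) p1
      have q2 := congrArg (Nat.cast (R := ℝ)) p2
      push_cast at q1 q2
      have e6 : s + 1 + 1 = s + 2 := rfl
      rw [e6]
      linarith [q1, q2]

lemma Fc_eq_gB : ∀ s k, Fc k s = gB k s := by
  intro s
  induction s using Nat.strong_induction_on with
  | _ s ihs =>
    cases s with
    | zero => intro k; rw [Fc_zero_right, gB_zero_right]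
    | succ t =>
      intro k
      induction k with
      | zero =>
          rw [Fc_zero, gB_zero_left (Nat.succ_ne_zero t), if_neg (Nat.succ_ne_zero t)]
      | succ k ihk =>
          rw [Fc_rec, ihk, gB_rec]
          congr 1
          exact ihs t (by omega) (k + 2)

lemma Fc_value {n i : ℕ} (h1 : 1 ≤ i) (h2 : i ≤ n) :
    Fc i (n - i) = (i : ℝ) / ((2 * n - i : ℕ) : ℝ) * (((2 * n - i).choose n : ℕ) : ℝ) := by
  rw [Fc_eq_gB]
  rcases eq_or_lt_of_le h2 with rfl | hlt
  · simp only [Nat.sub_self, gB_zero_right]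
    have hm : 2 * i - i = i := by omega
    rw [hm, Nat.choose_self]
    have hi0 : (i : ℝ) ≠ 0 := by
      have : 0 < i := h1
      exact_mod_cast this.ne'
    rw [Nat.cast_one, mul_one, div_self hi0]
  · have hs1 : 1 ≤ n - i := by omega
    have hgB : gB i (n - i) = ((2 * (n - i) + i - 1).choose (n - i) : ℝ)
        - ((2 * (n - i) + i - 1).choose (n - i - 1) : ℝ) := by
      rw [gB, if_neg (by omega)]
    set s := n - i with hs
    set m := 2 * n - i with hmdef
    have hm1 : 2 * s + i - 1 = m - 1 := by omega
    have hA : m * (m - 1).choose s = n * m.choose s := by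
      calc m * (m - 1).choose s = (m - 1 + 1) * (m - 1).choose s := by
            rw [show m - 1 + 1 = m by omega]
        _ = (m - 1 + 1).choose (s + 1) * (s + 1) := Nat.add_one_mul_choose_eq (m - 1) s
        _ = m.choose (s + 1) * (s + 1) := by rw [show m - 1 + 1 = m by omega]
        _ = m.choose s * (m - s) := Nat.choose_succ_right_eq m s
        _ = n * m.choose s := by rw [show m - s = n by omega]; ring
    have hB : m * (m - 1).choose (s - 1) = s * m.choose s := by
      calc m * (m - 1).choose (s - 1) = (m - 1 + 1) * (m - 1).choose (s - 1) := by
            rw [show m - 1 + 1 = m by omega]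
        _ = (m - 1 + 1).choose (s - 1 + 1) * (s - 1 + 1) := Nat.add_one_mul_choose_eq _ _
        _ = m.choose s * s := by
            rw [show m - 1 + 1 = m by omega, show s - 1 + 1 = s by omega]
        _ = s * m.choose s := mul_comm _ _
    have hsym : m.choose s = m.choose n := by
      rw [← Nat.choose_symm (show n ≤ m by omega), show m - n = s by omega]
    rw [hsym] at hA hB
    have hmR : ((m : ℕ) : ℝ) ≠ 0 := by
      have : 0 < m := by omega
      exact_mod_cast this.ne'
    have hAc : (m : ℝ) * ((m - 1).choose s : ℝ) = (n : ℝ) * (m.choose n : ℝ) := by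
      exact_mod_cast congrArg (Nat.cast (R := ℝ)) hA
    have hBc : (m : ℝ) * ((m - 1).choose (s - 1) : ℝ) = (s : ℝ) * (m.choose n : ℝ) := by
      exact_mod_cast congrArg (Nat.cast (R := ℝ)) hB
    have hi : (i : ℝ) = (n : ℝ) - (s : ℝ) := by
      have h' : i + s = n := by omega
      have := congrArg (Nat.cast (R := ℝ)) h'
      push_cast at this
      linarith
    rw [hgB, hm1, div_mul_eq_mul_div, eq_div_iff hmR]
    linear_combination hAc - hBc - ((m.choose n : ℕ) : ℝ) * hi

lemma triangle_swap (q : ℕ) (f : ℕ → ℕ → ℕ → ℝ) :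
    ∑ u ∈ range (q + 1), ∑ a ∈ range (u + 1), f a (u - a) (q - u)
      = ∑ a ∈ range (q + 1), ∑ s ∈ range (q - a + 1), f a s (q - a - s) := by
  rw [Finset.sum_sigma', Finset.sum_sigma']
  refine Finset.sum_nbij' (fun z => ⟨z.2, z.1 - z.2⟩) (fun z => ⟨z.1 + z.2, z.1⟩)
    ?_ ?_ ?_ ?_ ?_
  · rintro ⟨u, a⟩ h
    simp only [mem_sigma, mem_range] at h ⊢
    omega
  · rintro ⟨a, s⟩ h
    simp only [mem_sigma, mem_range] at h ⊢
    omega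
  · rintro ⟨u, a⟩ h
    simp only [mem_sigma, mem_range] at h
    have e : a + (u - a) = u := by omega
    simp [e]
  · rintro ⟨a, s⟩ h
    simp only [mem_sigma, mem_range] at h
    have e : a + s - a = s := by omega
    simp [e]
  · rintro ⟨u, a⟩ h
    simp only [mem_sigma, mem_range] at h
    have e : q - u = q - a - (u - a) := by omega
    rw [e]

lemma tri_comm (m : ℕ) (g : ℕ → ℕ → ℕ → ℝ) :
    ∑ s ∈ range (m + 1), ∑ b ∈ range (m - s + 1), g s b (m - s - b)
      = ∑ b ∈ range (m + 1), ∑ s ∈ range (m - b + 1), g s b (m - b - s) := by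
  rw [← triangle_swap m (fun a s v => g a s v)]
  rw [← triangle_swap m (fun b s v => g s b v)]
  refine Finset.sum_congr rfl fun u hu => ?_
  rw [mem_range] at hu
  refine Finset.sum_nbij' (fun a => u - a) (fun b => u - b) ?_ ?_ ?_ ?_ ?_
  · intro a ha; simp only [mem_range] at ha ⊢; omega
  · intro a ha; simp only [mem_range] at ha ⊢; omega
  · intro a ha; simp only [mem_range] at ha; beta_reduce; omega
  · intro a ha; simp only [mem_range] at ha; beta_reduce; omega
  · intro a ha; simp only [mem_range] at ha; beta_reduce
    rw [show u - (u - a) = a by omega]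

lemma Fc_conv_range (a b m : ℕ) :
    ∑ s ∈ range (m + 1), Fc a s * Fc b (m - s) = Fc (a + b) m := by
  rw [← Fc_conv a b m, Finset.Nat.sum_antidiagonal_eq_sum_range_succ_mk]

lemma L_formula (z : ℝ) : ∀ p, (∑ B ∈ treesOfSize p, z ^ B.leftBranchLen)
    = ∑ a ∈ range (p + 1), Fc a (p - a) * z ^ a := by
  intro p
  induction p using Nat.strong_induction_on with
  | _ p ih =>
    cases p with
    | zero => simp [treesOfSize_zero, BinTree.leftBranchLen, Fc_zero_right]
    | succ q =>
      rw [sum_treesOfSize_succ]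
      have step1 : ∀ uv ∈ antidiagonal q,
          (∑ l ∈ treesOfSize uv.1, ∑ r ∈ treesOfSize uv.2,
            z ^ (BinTree.node l r).leftBranchLen)
          = ∑ a ∈ range (uv.1 + 1), Fc a (uv.1 - a) * z ^ a * Tc uv.2 * z := by
        intro uv huv
        rw [Finset.HasAntidiagonal.mem_antidiagonal] at huv
        have hu : uv.1 ≤ q := by omega
        have inner : ∀ l : BinTree,
            (∑ _r ∈ treesOfSize uv.2, z ^ (BinTree.node l _r).leftBranchLen)
              = z ^ l.leftBranchLen * Tc uv.2 * z := by
          intro l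
          have : ∀ r : BinTree, (BinTree.node l r).leftBranchLen
              = l.leftBranchLen + 1 := fun r => rfl
          simp only [this]
          rw [Finset.sum_const, nsmul_eq_mul, Tc, pow_succ]
          ring
        rw [Finset.sum_congr rfl fun l _ => inner l]
        have : (∑ l ∈ treesOfSize uv.1, z ^ l.leftBranchLen * Tc uv.2 * z)
            = (∑ l ∈ treesOfSize uv.1, z ^ l.leftBranchLen) * Tc uv.2 * z := by
          rw [Finset.sum_mul, Finset.sum_mul]
        rw [this, ih uv.1 (by omega), Finset.sum_mul, Finset.sum_mul]
      rw [Finset.sum_congr rfl step1,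
        Finset.Nat.sum_antidiagonal_eq_sum_range_succ_mk,
        triangle_swap q (fun a s v => Fc a s * z ^ a * Tc v * z)]
      rw [Finset.sum_range_succ' _ (q + 1)]
      have h0 : Fc 0 (q + 1 - 0) * z ^ 0 = 0 := by
        rw [Fc_zero, if_neg (by omega)]; ring
      rw [h0, add_zero]
      refine Finset.sum_congr rfl fun a ha => ?_
      rw [mem_range] at ha
      have e : q + 1 - (a + 1) = q - a := by omega
      rw [e, Fc_succ,
        Finset.Nat.sum_antidiagonal_eq_sum_range_succ (fun p1 p2 => Fc a p1 * Tc p2),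
        Finset.sum_mul]
      refine Finset.sum_congr rfl fun s hs => ?_
      rw [pow_succ]
      ring

def mirror : BinTree → BinTree
  | .nil => .nil
  | .node l r => .node (mirror r) (mirror l)

lemma mirror_mirror : ∀ B, mirror (mirror B) = B
  | .nil => rfl
  | .node l r => by simp [mirror, mirror_mirror l, mirror_mirror r]

lemma size_mirror : ∀ B : BinTree, (mirror B).size = B.size
  | .nil => rfl
  | .node l r => by
      simp only [mirror, BinTree.size, size_mirror l, size_mirror r]; omega

lemma leftBranchLen_mirror : ∀ B : BinTree,
    (mirror B).leftBranchLen = B.rightBranchLen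
  | .nil => rfl
  | .node l r => by
      simp only [mirror, BinTree.leftBranchLen, BinTree.rightBranchLen,
        leftBranchLen_mirror r]

lemma R_formula (z : ℝ) (p : ℕ) : (∑ B ∈ treesOfSize p, z ^ B.rightBranchLen)
    = ∑ a ∈ range (p + 1), Fc a (p - a) * z ^ a := by
  rw [← L_formula z p]
  refine Finset.sum_nbij' mirror mirror ?_ ?_ ?_ ?_ ?_ <;>
    intro B hB <;>
    simp_all [size_mirror, mirror_mirror, leftBranchLen_mirror]

end Stmt15


/-- For every integer `n ≥ 1` and all real numbers `x`, `y`: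
`∑_B x^(ℓ(B) - 1) y^(r(B) - 1) = ∑_{i=1}^{n} (i/(2n - i))·C(2n - i, n)·∑_{j=0}^{i} x^j y^(i - j)`,
where the left-hand sum ranges over all binary trees `B` with `n + 1` vertices
and `ℓ(B)`, `r(B)` are the lengths of the left and right branches of `B`. -/
theorem sum_binTree_branch_weights (n : ℕ) (hn : 1 ≤ n) (x y : ℝ) :
    (∑ᶠ B ∈ {B : BinTree | B.size = n + 1},
        x ^ (B.leftBranchLen - 1) * y ^ (B.rightBranchLen - 1)) =
      ∑ i ∈ Finset.Icc 1 n,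
        (i : ℝ) / ((2 * n - i : ℕ) : ℝ) * (((2 * n - i).choose n : ℕ) : ℝ) *
          ∑ j ∈ Finset.range (i + 1), x ^ j * y ^ (i - j) := by
  classical
  have hset : {B : BinTree | B.size = n + 1} = ↑(Stmt15.treesOfSize (n + 1)) := by
    ext B; simp [Stmt15.mem_treesOfSize]
  rw [hset, finsum_mem_coe_finset, Stmt15.sum_treesOfSize_succ]
  have step1 : ∀ uv ∈ Finset.HasAntidiagonal.antidiagonal n,
      (∑ l ∈ Stmt15.treesOfSize uv.1, ∑ r ∈ Stmt15.treesOfSize uv.2,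
        x ^ ((BinTree.node l r).leftBranchLen - 1) *
          y ^ ((BinTree.node l r).rightBranchLen - 1))
      = (∑ a ∈ Finset.range (uv.1 + 1), Stmt15.Fc a (uv.1 - a) * x ^ a)
        * (∑ b ∈ Finset.range (uv.2 + 1), Stmt15.Fc b (uv.2 - b) * y ^ b) := by
    intro uv _
    rw [← Stmt15.L_formula x uv.1, ← Stmt15.R_formula y uv.2, Finset.sum_mul_sum]
    exact Finset.sum_congr rfl fun l _ => Finset.sum_congr rfl fun r _ => rfl
  rw [Finset.sum_congr rfl step1,
    Finset.Nat.sum_antidiagonal_eq_sum_range_succ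
      (fun p1 p2 => (∑ a ∈ Finset.range (p1 + 1), Stmt15.Fc a (p1 - a) * x ^ a)
        * (∑ b ∈ Finset.range (p2 + 1), Stmt15.Fc b (p2 - b) * y ^ b))]
  have step2 : ∀ u ∈ Finset.range (n + 1),
      ((∑ a ∈ Finset.range (u + 1), Stmt15.Fc a (u - a) * x ^ a)
        * (∑ b ∈ Finset.range (n - u + 1), Stmt15.Fc b (n - u - b) * y ^ b))
      = ∑ a ∈ Finset.range (u + 1), ∑ b ∈ Finset.range ((n - u) + 1),
          (Stmt15.Fc a (u - a) * x ^ a) * (Stmt15.Fc b ((n - u) - b) * y ^ b) :=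
    fun u _ => Finset.sum_mul_sum _ _ _ _
  rw [Finset.sum_congr rfl step2,
    Stmt15.triangle_swap n (fun a s v => ∑ b ∈ Finset.range (v + 1),
      (Stmt15.Fc a s * x ^ a) * (Stmt15.Fc b (v - b) * y ^ b))]
  have step3 : ∀ a ∈ Finset.range (n + 1),
      (∑ s ∈ Finset.range (n - a + 1), ∑ b ∈ Finset.range ((n - a - s) + 1),
        (Stmt15.Fc a s * x ^ a) * (Stmt15.Fc b ((n - a - s) - b) * y ^ b))
      = ∑ b ∈ Finset.range (n - a + 1), ∑ s ∈ Finset.range ((n - a - b) + 1),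
        (Stmt15.Fc a s * x ^ a) * (Stmt15.Fc b ((n - a - b) - s) * y ^ b) :=
    fun a _ => Stmt15.tri_comm (n - a)
      (fun s b v => (Stmt15.Fc a s * x ^ a) * (Stmt15.Fc b v * y ^ b))
  rw [Finset.sum_congr rfl step3,
    ← Stmt15.triangle_swap n (fun a b v => ∑ s ∈ Finset.range (v + 1),
      (Stmt15.Fc a s * x ^ a) * (Stmt15.Fc b (v - s) * y ^ b))]
  have step4 : ∀ i ∈ Finset.range (n + 1),
      (∑ j ∈ Finset.range (i + 1), ∑ s ∈ Finset.range ((n - i) + 1),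
        (Stmt15.Fc j s * x ^ j) * (Stmt15.Fc (i - j) ((n - i) - s) * y ^ (i - j)))
      = Stmt15.Fc i (n - i) * ∑ j ∈ Finset.range (i + 1), x ^ j * y ^ (i - j) := by
    intro i hi
    rw [Finset.mul_sum]
    refine Finset.sum_congr rfl fun j hj => ?_
    rw [Finset.mem_range] at hi hj
    have hre : ∀ s, (Stmt15.Fc j s * x ^ j) * (Stmt15.Fc (i - j) ((n - i) - s) * y ^ (i - j))
        = (Stmt15.Fc j s * Stmt15.Fc (i - j) ((n - i) - s)) * (x ^ j * y ^ (i - j)) :=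
      fun s => by ring
    rw [Finset.sum_congr rfl fun s _ => hre s, ← Finset.sum_mul,
      Stmt15.Fc_conv_range, show j + (i - j) = i by omega]
  rw [Finset.sum_congr rfl step4]
  have hsplit : Finset.range (n + 1) = insert 0 (Finset.Icc 1 n) := by
    ext t; simp only [Finset.mem_range, Finset.mem_insert, Finset.mem_Icc]; omega
  rw [hsplit, Finset.sum_insert (by simp)]
  have h00 : Stmt15.Fc 0 (n - 0) *
      ∑ j ∈ Finset.range (0 + 1), x ^ j * y ^ (0 - j) = 0 := by
    rw [Stmt15.Fc_zero, if_neg (by omega)]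
    ring
  rw [h00, zero_add]
  refine Finset.sum_congr rfl fun i hi => ?_
  rw [Finset.mem_Icc] at hi
  rw [Stmt15.Fc_value hi.1 hi.2]
end

section
/- For every integer n ≥ 1, ∑_{i=1}^{n} (i+1)·(i/(2n−i))·binomial(2n−i, n) = C_{n+1}, where C_{n+1} = (1/(n+2))·binomial(2n+2, n+1) is the (n+1)-st Catalan number. -/
/-- For every integer `n ≥ 1`,
`∑_{i=1}^{n} (i + 1)·(i/(2n - i))·binomial(2n - i, n) = C_{n+1}`, where
`C_{n+1} = (1/(n + 2))·binomial(2n + 2, n + 1)` is the `(n+1)`-st Catalan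
number. -/
theorem sum_ballot_eq_catalan (n : ℕ) (hn : 1 ≤ n) :
    (∑ i ∈ Finset.Icc 1 n,
        ((i : ℚ) + 1) * ((i : ℚ) / ((2 * n - i : ℕ) : ℚ)) *
          (((2 * n - i).choose n : ℕ) : ℚ)) =
      (((2 * n + 2).choose (n + 1) : ℕ) : ℚ) / ((n : ℚ) + 2) := by
  set f : ℕ → ℚ := fun i =>
    (((i : ℚ)^2 * (n + 1) + (3 * n + 1) * i + 2 * (2 * n + 1)) *
      (((2 * n - i).choose n : ℕ) : ℚ)) / (((n : ℚ) + 1) * ((n : ℚ) + 2)) with hf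
  have key : ∀ j : ℕ, 1 ≤ j → j ≤ n →
      ((j : ℚ) + 1) * ((j : ℚ) / ((2 * n - j : ℕ) : ℚ)) *
        (((2 * n - j).choose n : ℕ) : ℚ) = f j - f (j + 1) := by
    intro j hj1 hjn
    have h1 : 2 * n - (j + 1) = 2 * n - j - 1 := by omega
    have h2 : 2 * n - j - 1 + 1 = 2 * n - j := by omega
    have hkey := Nat.choose_mul_succ_eq (2 * n - j - 1) n
    rw [h2] at hkey
    have h3 : 2 * n - j - n = n - j := by omega
    rw [h3] at hkey
    have hcast : ((2 * n - j : ℕ) : ℚ) = 2 * n - j := by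
      have : j ≤ 2 * n := by omega
      push_cast [this]; ring
    have hcast2 : ((n - j : ℕ) : ℚ) = n - j := by push_cast [hjn]; ring
    have hq : (((2 * n - j - 1).choose n : ℕ) : ℚ) * (2 * (n : ℚ) - j) =
        (((2 * n - j).choose n : ℕ) : ℚ) * ((n : ℚ) - j) := by
      have := congrArg (fun x : ℕ => (x : ℚ)) hkey
      push_cast at this
      rw [hcast, hcast2] at this
      linarith [this]
    simp only [hf, h1]
    set a : ℚ := (((2 * n - j).choose n : ℕ) : ℚ)
    set b : ℚ := (((2 * n - j - 1).choose n : ℕ) : ℚ)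
    rw [hcast]
    have hd : (2 * (n : ℚ) - j) ≠ 0 := by
      have : (j : ℚ) ≤ n := by exact_mod_cast hjn
      have : (1 : ℚ) ≤ n := by exact_mod_cast hn
      nlinarith
    have hn1 : ((n : ℚ) + 1) ≠ 0 := by positivity
    have hn2 : ((n : ℚ) + 2) ≠ 0 := by positivity
    field_simp
    push_cast
    linear_combination (((j:ℚ)+1)^2*((n:ℚ)+1)+(3*(n:ℚ)+1)*((j:ℚ)+1)+2*(2*(n:ℚ)+1)) * hq
  have htel : (∑ i ∈ Finset.Icc 1 n,
      ((i : ℚ) + 1) * ((i : ℚ) / ((2 * n - i : ℕ) : ℚ)) *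
        (((2 * n - i).choose n : ℕ) : ℚ)) = f 1 - f (n + 1) := by
    rw [← Finset.Ico_add_one_right_eq_Icc, Finset.sum_Ico_eq_sum_range]
    have hr : n + 1 - 1 = n := rfl
    rw [hr]
    have := Finset.sum_range_sub' (fun i => f (i + 1)) n
    rw [← this]
    apply Finset.sum_congr rfl
    intro i hi
    simp only [Finset.mem_range] at hi
    have := key (1 + i) (by omega) (by omega)
    rw [this]
    have h1i : 1 + i = i + 1 := by omega
    rw [h1i]
  rw [htel]
  have hfn1 : f (n + 1) = 0 := by
    have h0 : 2 * n - (n + 1) = n - 1 := by omega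
    have hz : (n - 1).choose n = 0 := Nat.choose_eq_zero_of_lt (by omega)
    simp [hf, h0, hz]
  rw [hfn1, sub_zero]
  -- now evaluate f 1
  have hA := Nat.choose_mul_succ_eq (2 * n - 1) n
  rw [show 2 * n - 1 + 1 = 2 * n by omega, show 2 * n - n = n by omega] at hA
  have hB := Nat.choose_mul_succ_eq (2 * n) n
  rw [show 2 * n + 1 - n = n + 1 by omega] at hB
  have hC := Nat.choose_mul_succ_eq (2 * n + 1) (n + 1)
  rw [show 2 * n + 1 + 1 = 2 * n + 2 by omega, show 2 * n + 2 - (n + 1) = n + 1 by omega] at hC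
  have hS : (2 * n + 1).choose (n + 1) = (2 * n + 1).choose n := by
    rw [← Nat.choose_symm (show n + 1 ≤ 2 * n + 1 by omega),
      show 2 * n + 1 - (n + 1) = n by omega]
  rw [hS] at hC
  have hc2 : (2 * n).choose n = 2 * ((2 * n - 1).choose n) := by
    have h2n : (2 * n - 1).choose n * (2 * n) = 2 * ((2 * n - 1).choose n) * n := by ring
    have := hA.symm.trans h2n
    exact (Nat.eq_of_mul_eq_mul_right (by omega) this)
  have hfin : (8 * n + 4) * ((2 * n - 1).choose n) = (2 * n + 2).choose (n + 1) * (n + 1) := by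
    have h1 : (8 * n + 4) * ((2 * n - 1).choose n) * (n + 1)
        = (2 * n + 2).choose (n + 1) * (n + 1) * (n + 1) := by
      have e1 : (8 * n + 4) * ((2 * n - 1).choose n) * (n + 1)
          = 2 * (n + 1) * ((2 * n).choose n * (2 * n + 1)) := by rw [hc2]; ring
      rw [e1, hB, ← hC]; ring
    exact Nat.eq_of_mul_eq_mul_right (by omega) h1
  have hfinq : ((8 : ℚ) * n + 4) * (((2 * n - 1).choose n : ℕ) : ℚ)
      = (((2 * n + 2).choose (n + 1) : ℕ) : ℚ) * ((n : ℚ) + 1) := by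
    exact_mod_cast congrArg (fun x : ℕ => (x : ℚ)) hfin
  have h21 : 2 * n - 1 = 2 * n - 1 := rfl
  simp only [hf]
  rw [show ((2 * n - 1 : ℕ)) = 2 * n - 1 from rfl]
  have hn1 : ((n : ℚ) + 1) ≠ 0 := by positivity
  have hn2 : ((n : ℚ) + 2) ≠ 0 := by positivity
  field_simp
  linear_combination hfinq
end
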